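/- If f : U → ℂ is holomorphic and injective on an open set U ⊆ ℂ, then its derivative is nowhere zero on U. -/

import Mathlib

open Complex Filter Set
open scoped Topology Real

/-- An injective holomorphic function on an open set has nowhere vanishing
derivative. -/
theorem stmt15 (U : Set ℂ) (hU : IsOpen U) (f : ℂ → ℂ)
    (hf : DifferentiableOn ℂ f U) (hinj : Set.InjOn f U) :
    ∀ z ∈ U, deriv f z ≠ 0 := by
  intro z₀ hz₀ hd
  have hfa : AnalyticAt ℂ f z₀ := (hf.analyticOnNhd hU) z₀ hz₀
  set g : ℂ → ℂ := fun w => f w - f z₀ with hg_def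
  have hga : AnalyticAt ℂ g z₀ := hfa.sub analyticAt_const
  have hUz : U ∈ 𝓝 z₀ := hU.mem_nhds hz₀
  by_cases hev : ∀ᶠ w in 𝓝 z₀, g w = 0
  · -- f is locally constant, contradicting injectivity
    have hUe : ∀ᶠ w in 𝓝 z₀, w ∈ U := hUz
    have h1 : ∀ᶠ w in 𝓝[≠] z₀, g w = 0 ∧ w ∈ U :=
      nhdsWithin_le_nhds (hev.and hUe)
    obtain ⟨w, ⟨hw0, hwU⟩, hwne⟩ := (h1.and self_mem_nhdsWithin).exists
    have hwne' : w ≠ z₀ := by simpa using hwne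
    exact hwne' (hinj hwU hz₀ (by simpa [hg_def, sub_eq_zero] using hw0))
  · have hord : analyticOrderAt g z₀ ≠ ⊤ := fun ht => hev (analyticOrderAt_eq_top.mp ht)
    obtain ⟨n, hn⟩ : ∃ n : ℕ, analyticOrderAt g z₀ = n := ⟨(analyticOrderAt g z₀).toNat, (ENat.coe_toNat hord).symm⟩
    obtain ⟨h, hh_an, hh0, hfeq⟩ := (hga.analyticOrderAt_eq_natCast (n := n)).mp hn
    -- n ≥ 2
    have hgz₀ : g z₀ = 0 := sub_self _
    have hn0 : n ≠ 0 := by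
      rintro rfl
      have := hfeq.self_of_nhds
      simp [hgz₀] at this
      exact hh0 this.symm
    have hn1 : n ≠ 1 := by
      rintro rfl
      have hEq : g =ᶠ[𝓝 z₀] fun w => (w - z₀) * h w := by
        filter_upwards [hfeq] with w hw; simpa using hw
      have hda : HasDerivAt (fun w => (w - z₀) * h w)
          (1 * h z₀ + (z₀ - z₀) * deriv h z₀) z₀ :=
        (((hasDerivAt_id z₀).sub_const z₀).mul hh_an.differentiableAt.hasDerivAt)
      have hdg : deriv g z₀ = 0 := by
        have : deriv g z₀ = deriv f z₀ := by
          simp [hg_def, deriv_sub_const]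
        rw [this, hd]
      rw [hEq.deriv_eq, hda.deriv] at hdg
      simp at hdg
      exact hh0 hdg
    have hn2 : 2 ≤ n := by omega
    set c := h z₀ with hc_def
    have hc : c ≠ 0 := hh0
    have hnC : (n : ℂ) ≠ 0 := Nat.cast_ne_zero.mpr hn0
    set d : ℂ := Complex.exp (Complex.log c / n) with hd_def
    have hd0 : d ≠ 0 := Complex.exp_ne_zero _
    have hdn : d ^ n = c := by
      rw [hd_def, ← Complex.exp_nat_mul, mul_div_cancel₀ _ hnC, Complex.exp_log hc]
    set r : ℂ → ℂ := fun w => Complex.exp (Complex.log (h w / c) / n) with hr_def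
    have hra : AnalyticAt ℂ r z₀ := by
      apply analyticAt_cexp.comp
      apply AnalyticAt.div _ analyticAt_const hnC
      apply (analyticAt_clog _).comp (hh_an.div analyticAt_const hc)
      simpa [← hc_def, div_self hc] using one_mem_slitPlane
    set φ : ℂ → ℂ := fun w => (w - z₀) * (d * r w) with hφ_def
    have hrz₀ : r z₀ = 1 := by
      simp [hr_def, ← hc_def, div_self hc]
    have hφz₀ : φ z₀ = 0 := by simp [hφ_def]
    -- strict derivative of φ at z₀ is d ≠ 0
    obtain ⟨p, hp⟩ := hra
    have hrs : HasStrictDerivAt r (p.coeff 1) z₀ := hp.hasStrictDerivAt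
    have hφs : HasStrictDerivAt φ d z₀ := by
      have ha : HasStrictDerivAt (fun y : ℂ => y - z₀) 1 z₀ :=
        (hasStrictDerivAt_id z₀).sub_const z₀
      have hb : HasStrictDerivAt (fun y : ℂ => d * r y) (d * p.coeff 1) z₀ :=
        hrs.const_mul d
      have h1 : HasStrictDerivAt φ (1 * (d * r z₀) + (z₀ - z₀) * (d * p.coeff 1)) z₀ :=
        ha.mul hb
      have h2 : 1 * (d * r z₀) + (z₀ - z₀) * (d * p.coeff 1) = d := by
        simp [hrz₀]
      rwa [h2] at h1
    -- eventually f w = f z₀ + φ w ^ n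
    have hhne : ∀ᶠ w in 𝓝 z₀, h w ≠ 0 := hh_an.continuousAt.eventually_ne hc
    have hkey : ∀ᶠ w in 𝓝 z₀, f w = f z₀ + φ w ^ n := by
      filter_upwards [hfeq, hhne] with w hw hwne
      have hrn : r w ^ n = h w / c := by
        rw [hr_def, ← Complex.exp_nat_mul, mul_div_cancel₀ _ hnC,
          Complex.exp_log (div_ne_zero hwne hc)]
      have : φ w ^ n = g w := by
        rw [hw, hφ_def]
        simp only [mul_pow, hrn, hdn, smul_eq_mul]
        field_simp
      rw [this]
      simp only [hg_def]
      ring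
    -- the set S and its image
    set S : Set ℂ := U ∩ {w | f w = f z₀ + φ w ^ n} with hS_def
    have hS : S ∈ 𝓝 z₀ := inter_mem hUz hkey
    have hmap : map φ (𝓝 z₀) = 𝓝 (0 : ℂ) := by
      have := hφs.map_nhds_eq hd0
      rwa [hφz₀] at this
    have hV : φ '' S ∈ 𝓝 (0 : ℂ) := by
      rw [← hmap, mem_map]
      exact mem_of_superset hS (subset_preimage_image φ S)
    -- the root of unity ζ
    set ζ : ℂ := Complex.exp (2 * π * I / n) with hζ_def
    have hζn : ζ ^ n = 1 := by
      rw [hζ_def, ← Complex.exp_nat_mul, mul_div_cancel₀ _ hnC, Complex.exp_two_pi_mul_I]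
    have hζ1 : ζ ≠ 1 := by
      intro h1
      obtain ⟨k, hk⟩ := Complex.exp_eq_one_iff.mp (hζ_def ▸ h1)
      have h2 : (2 * π * I : ℂ) ≠ 0 := by
        simp [Real.pi_ne_zero, Complex.I_ne_zero]
      have h3 : (2 * π * I : ℂ) = k * (2 * π * I) * n := by
        have := congrArg (fun x : ℂ => x * n) hk
        simpa [div_mul_cancel₀ _ hnC] using this
      have h4 : ((k : ℂ) * n) * (2 * π * I) = 1 * (2 * π * I) := by
        linear_combination -h3
      have hkn : (k : ℂ) * n = 1 := mul_right_cancel₀ h2 h4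
      have hint : (k * n : ℤ) = 1 := by exact_mod_cast hkn
      have hdvd : (n : ℤ) ∣ 1 := ⟨k, by rw [mul_comm]; exact hint.symm⟩
      have := Int.le_of_dvd one_pos hdvd
      omega
    -- find a ≠ 0 with a ∈ φ '' S and ζ * a ∈ φ '' S
    have hζV : {x : ℂ | ζ * x ∈ φ '' S} ∈ 𝓝 (0 : ℂ) := by
      have hcont : ContinuousAt (fun x : ℂ => ζ * x) 0 := (continuous_const.mul continuous_id).continuousAt
      have := hcont.preimage_mem_nhds (by simpa using hV)
      exact this
    have hVe : ∀ᶠ x in 𝓝 (0 : ℂ), x ∈ φ '' S := hV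
    have hζVe : ∀ᶠ x in 𝓝 (0 : ℂ), ζ * x ∈ φ '' S := hζV
    have hW : ∀ᶠ x in 𝓝 (0 : ℂ), x ∈ φ '' S ∧ ζ * x ∈ φ '' S := hVe.and hζVe
    have hW' : ∀ᶠ x in 𝓝[≠] (0 : ℂ), x ∈ φ '' S ∧ ζ * x ∈ φ '' S := nhdsWithin_le_nhds hW
    obtain ⟨a, ⟨haV, haζ⟩, ha0'⟩ := (hW'.and self_mem_nhdsWithin).exists
    have ha0 : a ≠ 0 := by simpa using ha0' 
    obtain ⟨w₁, hw₁S, hw₁⟩ := haV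
    obtain ⟨w₂, hw₂S, hw₂⟩ := haζ
    have hne : w₁ ≠ w₂ := by
      rintro rfl
      rw [hw₁] at hw₂
      have : (ζ - 1) * a = 0 := by linear_combination -hw₂
      rcases mul_eq_zero.mp this with h | h
      · exact hζ1 (by linear_combination h)
      · exact ha0 h
    have hfeq12 : f w₁ = f w₂ := by
      rw [hw₁S.2, hw₂S.2, hw₁, hw₂, mul_pow, hζn, one_mul]
    exact hne (hinj hw₁S.1 hw₂S.1 hfeq12)
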